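/- Suppose E : [1,∞) → [0,∞) satisfies: (i) E(R) ≤ C R^n for all R > 1, and (ii) for all R large and all real L with 10 < L < R, E(R) ≤ C L^n R^{-2} E(4R) + C L^{-2(p+1)/(p-1)} R^n, where C > 0, n ≥ 3 and p > 1 are fixed. Define α_0 = 0, α_{k+1} = (α_k + 2)·2(p+1)/(n(p-1)+2(p+1)). Then for every k there exists a constant C_k such that E(R) ≤ C_k R^{n - α_k} for all R > 1. -/

import Mathlib

open Real

theorem energy_iteration
    (n : ℕ) (hn : 3 ≤ n) (p C : ℝ) (hp : 1 < p) (hC : 0 < C)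
    (E : ℝ → ℝ) (hE_nonneg : ∀ R, 1 ≤ R → 0 ≤ E R)
    (hE_growth : ∀ R : ℝ, 1 < R → E R ≤ C * R ^ (n : ℝ))
    (hE_rec : ∃ R₀ : ℝ, ∀ R : ℝ, R₀ ≤ R → ∀ L : ℝ, 10 < L → L < R →
      E R ≤ C * L ^ (n : ℝ) * R ^ (-2 : ℝ) * E (4 * R)
            + C * L ^ (-(2 * (p + 1) / (p - 1))) * R ^ (n : ℝ))
    (α : ℕ → ℝ) (hα0 : α 0 = 0)
    (hαrec : ∀ k, α (k + 1) = (α k + 2) * (2 * (p + 1) / ((n : ℝ) * (p - 1) + 2 * (p + 1)))) :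
    ∀ k : ℕ, ∃ Ck : ℝ, ∀ R : ℝ, 1 < R → E R ≤ Ck * R ^ ((n : ℝ) - α k) := by
  obtain ⟨R₀, hrec⟩ := hE_rec
  have hn' : (3 : ℝ) ≤ (n : ℝ) := by exact_mod_cast hn
  have hp1 : (0 : ℝ) < p - 1 := by linarith
  have hD : (0 : ℝ) < (n : ℝ) * (p - 1) + 2 * (p + 1) := by nlinarith
  have hnp : (0 : ℝ) < (n : ℝ) * (p - 1) := by nlinarith
  -- bounds on α
  have hM : ∀ k, 0 ≤ α k ∧ α k ≤ 4 * (p + 1) / ((n : ℝ) * (p - 1)) := by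
    intro k
    induction k with
    | zero =>
      rw [hα0]
      exact ⟨le_refl 0, by positivity⟩
    | succ k ih =>
      obtain ⟨h0, h1⟩ := ih
      rw [hαrec k]
      constructor
      · apply mul_nonneg (by linarith)
        positivity
      · have key : (4 * (p + 1) / ((n : ℝ) * (p - 1)) + 2) *
            (2 * (p + 1) / ((n : ℝ) * (p - 1) + 2 * (p + 1)))
            = 4 * (p + 1) / ((n : ℝ) * (p - 1)) := by
          field_simp
          ring
        calc (α k + 2) * (2 * (p + 1) / ((n : ℝ) * (p - 1) + 2 * (p + 1)))
            ≤ (4 * (p + 1) / ((n : ℝ) * (p - 1)) + 2) *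
              (2 * (p + 1) / ((n : ℝ) * (p - 1) + 2 * (p + 1))) := by
              apply mul_le_mul_of_nonneg_right (by linarith)
              positivity
          _ = _ := key
  intro k
  induction k with
  | zero =>
    refine ⟨C, fun R hR => ?_⟩
    simpa [hα0] using hE_growth R hR
  | succ k ih =>
    obtain ⟨Ck, hCk⟩ := ih
    set Ck' := max Ck 0 with hCk'def
    have hCk'0 : 0 ≤ Ck' := le_max_right _ _
    have hCk' : ∀ R, 1 < R → E R ≤ Ck' * R ^ ((n : ℝ) - α k) := by
      intro R hR
      refine (hCk R hR).trans ?_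
      apply mul_le_mul_of_nonneg_right (le_max_left _ _)
      positivity
    obtain ⟨ha0, haM⟩ := hM k
    have hα1 : 0 ≤ α (k + 1) := (hM (k + 1)).1
    set a := α k with hadef
    set θ := (2 + a) * (p - 1) / ((n : ℝ) * (p - 1) + 2 * (p + 1)) with hθdef
    have hθ0 : 0 < θ := by
      apply div_pos (mul_pos (by linarith) hp1) hD
    have haM' : a * ((n : ℝ) * (p - 1)) ≤ 4 * (p + 1) := by
      rw [le_div_iff₀ hnp] at haM
      exact haM
    have hθ1 : θ < 1 := by
      rw [hθdef, div_lt_one hD]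
      nlinarith [mul_nonneg ha0 hp1.le, mul_nonneg (mul_nonneg ha0 hp1.le) (by linarith : (0:ℝ) ≤ (n:ℝ) - 3)]
    set R₁ := 1 + max R₀ (max 2 ((10 : ℝ) ^ (1 / θ))) with hR₁def
    set Ck1 := max (C * R₁ ^ (α (k + 1)))
      (C * Ck' * (4 : ℝ) ^ ((n : ℝ) - a) + C) with hCk1def
    refine ⟨Ck1, fun R hR => ?_⟩
    have hRpos : (0 : ℝ) < R := by linarith
    -- exponent identities
    have hexp1 : θ * (n : ℝ) + -2 + ((n : ℝ) - a) = (n : ℝ) - α (k + 1) := by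
      rw [hαrec k, hθdef, ← hadef]
      field_simp
      ring
    have hexp2 : θ * (-(2 * (p + 1) / (p - 1))) + (n : ℝ) = (n : ℝ) - α (k + 1) := by
      rw [hαrec k, hθdef, ← hadef]
      field_simp
      ring
    rcases le_or_gt R₁ R with hR₁ | hR₁
    · -- large R
      have hR0 : R₀ ≤ R := by
        have := le_max_left R₀ (max 2 ((10 : ℝ) ^ (1 / θ)))
        rw [hR₁def] at hR₁; linarith
      have h10 : (10 : ℝ) ^ (1 / θ) < R := by
        have h1 := (le_max_right 2 ((10 : ℝ) ^ (1 / θ))).trans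
          (le_max_right R₀ (max 2 ((10 : ℝ) ^ (1 / θ))))
        rw [hR₁def] at hR₁; linarith
      have hL10 : 10 < R ^ θ := by
        have : ((10 : ℝ) ^ (1 / θ)) ^ θ < R ^ θ :=
          Real.rpow_lt_rpow (by positivity) h10 hθ0
        rwa [← Real.rpow_mul (by norm_num), one_div_mul_cancel hθ0.ne',
          Real.rpow_one] at this
      have hLR : R ^ θ < R := by
        have : R ^ θ < R ^ (1 : ℝ) := by
          exact (Real.rpow_lt_rpow_left_iff hR).mpr hθ1
        rwa [Real.rpow_one] at this
      have hmain := hrec R hR0 (R ^ θ) hL10 hLR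
      have h4R : E (4 * R) ≤ Ck' * (4 * R) ^ ((n : ℝ) - a) := hCk' (4 * R) (by linarith)
      have hcoef : (0 : ℝ) ≤ C * (R ^ θ) ^ (n : ℝ) * R ^ (-2 : ℝ) := by positivity
      have hterm1 : C * (R ^ θ) ^ (n : ℝ) * R ^ (-2 : ℝ) * E (4 * R)
          ≤ C * Ck' * (4 : ℝ) ^ ((n : ℝ) - a) * R ^ ((n : ℝ) - α (k + 1)) := by
        calc C * (R ^ θ) ^ (n : ℝ) * R ^ (-2 : ℝ) * E (4 * R)
            ≤ C * (R ^ θ) ^ (n : ℝ) * R ^ (-2 : ℝ) * (Ck' * (4 * R) ^ ((n : ℝ) - a)) :=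
              mul_le_mul_of_nonneg_left h4R hcoef
          _ = C * Ck' * (4 : ℝ) ^ ((n : ℝ) - a) *
              (R ^ (θ * (n : ℝ)) * R ^ (-2 : ℝ) * R ^ ((n : ℝ) - a)) := by
              rw [Real.mul_rpow (by norm_num) hRpos.le, ← Real.rpow_mul hRpos.le]
              ring
          _ = C * Ck' * (4 : ℝ) ^ ((n : ℝ) - a) * R ^ ((n : ℝ) - α (k + 1)) := by
              rw [← Real.rpow_add hRpos, ← Real.rpow_add hRpos, hexp1]
      have hterm2 : C * (R ^ θ) ^ (-(2 * (p + 1) / (p - 1))) * R ^ (n : ℝ)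
          = C * R ^ ((n : ℝ) - α (k + 1)) := by
        rw [← Real.rpow_mul hRpos.le, mul_assoc, ← Real.rpow_add hRpos, hexp2]
      calc E R ≤ C * (R ^ θ) ^ (n : ℝ) * R ^ (-2 : ℝ) * E (4 * R)
            + C * (R ^ θ) ^ (-(2 * (p + 1) / (p - 1))) * R ^ (n : ℝ) := hmain
        _ ≤ C * Ck' * (4 : ℝ) ^ ((n : ℝ) - a) * R ^ ((n : ℝ) - α (k + 1))
            + C * R ^ ((n : ℝ) - α (k + 1)) := by
            rw [hterm2]
            exact add_le_add_left hterm1 _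
        _ = (C * Ck' * (4 : ℝ) ^ ((n : ℝ) - a) + C) * R ^ ((n : ℝ) - α (k + 1)) := by ring
        _ ≤ Ck1 * R ^ ((n : ℝ) - α (k + 1)) := by
            apply mul_le_mul_of_nonneg_right (le_max_right _ _)
            positivity
    · -- small R
      have hsplit : R ^ (n : ℝ) = R ^ (α (k + 1)) * R ^ ((n : ℝ) - α (k + 1)) := by
        rw [← Real.rpow_add hRpos]
        ring_nf
      have hmono : R ^ (α (k + 1)) ≤ R₁ ^ (α (k + 1)) :=
        Real.rpow_le_rpow hRpos.le hR₁.le hα1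
      calc E R ≤ C * R ^ (n : ℝ) := hE_growth R hR
        _ = C * R ^ (α (k + 1)) * R ^ ((n : ℝ) - α (k + 1)) := by rw [hsplit]; ring
        _ ≤ C * R₁ ^ (α (k + 1)) * R ^ ((n : ℝ) - α (k + 1)) := by
            apply mul_le_mul_of_nonneg_right (mul_le_mul_of_nonneg_left hmono hC.le)
            positivity
        _ ≤ Ck1 * R ^ ((n : ℝ) - α (k + 1)) := by
            apply mul_le_mul_of_nonneg_right (le_max_left _ _)
            positivity
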